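/- Let k ≥ 1 and let G be a nontrivial prosoluble profinite group in which every uniform k-step commutator is an FC-element. Then the Fitting subgroup of G is nontrivial; that is, G has a nontrivial pronilpotent closed normal subgroup. -/

import Mathlib

/-- The commutator `[a,b] = a⁻¹ * b⁻¹ * a * b`. -/
def pcomm {G : Type*} [Group G] (a b : G) : G := a⁻¹ * b⁻¹ * a * b

/-- Left-normed commutator `[x₁,…,xₙ]` of a list of group elements
(equal to `1` for the empty list). -/
def lnc {G : Type*} [Group G] : List G → G
  | [] => 1
  | a :: t => t.foldl pcomm a

section LncLemmas

variable {G : Type*} {H : Type*} [Group G] [Group H]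

lemma lnc_cons (a : G) (t : List G) : lnc (a :: t) = t.foldl pcomm a := rfl

lemma lnc_singleton (a : G) : lnc [a] = a := rfl

lemma map_pcomm (f : G →* H) (a b : G) : f (pcomm a b) = pcomm (f a) (f b) := by
  simp [pcomm]

lemma map_foldl_pcomm (f : G →* H) : ∀ (t : List G) (a : G),
    f (t.foldl pcomm a) = (t.map f).foldl pcomm (f a)
  | [], a => rfl
  | b :: t, a => by
    rw [List.foldl_cons, List.map_cons, List.foldl_cons, ← map_pcomm, map_foldl_pcomm f t]

lemma map_lnc (f : G →* H) : ∀ l : List G, f (lnc l) = lnc (l.map f)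
  | [] => by simp [lnc]
  | a :: t => by rw [lnc_cons, map_foldl_pcomm, List.map_cons, lnc_cons]

lemma lnc_concat (a : G) (t : List G) (s : G) :
    lnc ((a :: t) ++ [s]) = pcomm (lnc (a :: t)) s := by
  rw [List.cons_append, lnc_cons, List.foldl_append, List.foldl_cons, List.foldl_nil, lnc_cons]

lemma exists_list_preimage (f : G →* H) (T : Set G) :
    ∀ lb : List H, (∀ z ∈ lb, ∃ w ∈ T, f w = z) →
      ∃ l : List G, (∀ w ∈ l, w ∈ T) ∧ l.map f = lb
  | [], _ => ⟨[], by simp, rfl⟩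
  | b :: t, hb => by
    obtain ⟨w, hwT, hfw⟩ := hb b (by simp)
    obtain ⟨l, hl, hml⟩ := exists_list_preimage f T t (fun z hz => hb z (by simp [hz]))
    refine ⟨w :: l, ?_, by simp [hml, hfw]⟩
    intro v hv
    rcases List.mem_cons.mp hv with h | h
    · exact h ▸ hwT
    · exact hl v h

end LncLemmas

lemma isNilpotent_of_comm {K : Type*} [hK : Group K] (h : ∀ a b : K, a * b = b * a) :
    Group.IsNilpotent K := by
  letI : CommGroup K := { hK with mul_comm := h }
  infer_instance

universe u

lemma isNilpotent_of_lnc (n : ℕ) :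
    ∀ (K : Type u) [Group K] (S : Set K), Subgroup.closure S = ⊤ →
      (∀ l : List K, l.length = n + 1 → (∀ z ∈ l, z ∈ S) → lnc l = 1) →
      Group.IsNilpotent K := by
  induction n with
  | zero =>
    intro K _ S hgen hl
    have hS1 : ∀ s ∈ S, s = (1 : K) := by
      intro s hs
      have := hl [s] rfl (by simpa using hs)
      simpa [lnc_singleton] using this
    have : ∀ x : K, x = 1 := by
      intro x
      have hx : x ∈ Subgroup.closure S := by rw [hgen]; trivial
      have hle : Subgroup.closure S ≤ ⊥ := by
        apply (Subgroup.closure_le _).mpr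
        intro s hs
        simp [hS1 s hs]
      simpa using hle hx
    exact isNilpotent_of_comm (fun a b => by rw [this a, this b])
  | succ n ih =>
    intro K _ S hgen hl
    -- (n+1)-fold commutators of elements of S are central
    have hcent : ∀ l : List K, l.length = n + 1 → (∀ z ∈ l, z ∈ S) →
        lnc l ∈ Subgroup.center K := by
      intro l hlen hmem
      have hcomm : ∀ s ∈ S, lnc l * s = s * lnc l := by
        intro s hs
        cases l with
        | nil => simp at hlen
        | cons a t =>
          have hmem' : ∀ z ∈ (a :: t) ++ [s], z ∈ S := by
            intro z hz
            rcases List.mem_append.mp hz with h | h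
            · exact hmem z h
            · rw [List.mem_singleton.mp h]; exact hs
          have h1 := hl ((a :: t) ++ [s]) (by rw [List.length_append, hlen]; rfl) hmem'
          have h2 : pcomm (lnc (a :: t)) s = 1 := by rwa [lnc_concat] at h1
          unfold pcomm at h2
          calc lnc (a :: t) * s
              = s * lnc (a :: t) * ((lnc (a :: t))⁻¹ * s⁻¹ * lnc (a :: t) * s) := by group
            _ = s * lnc (a :: t) := by rw [h2, mul_one]
      rw [Subgroup.mem_center_iff]
      intro g
      have hg : g ∈ Subgroup.centralizer {lnc l} := by
        have hle : Subgroup.closure S ≤ Subgroup.centralizer {lnc l} := by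
          apply (Subgroup.closure_le _).mpr
          intro s hs
          rw [SetLike.mem_coe, Subgroup.mem_centralizer_iff]
          intro u hu
          rw [Set.mem_singleton_iff] at hu
          rw [hu]
          exact hcomm s hs
        exact hle (by rw [hgen]; trivial)
      rw [Subgroup.mem_centralizer_iff] at hg
      exact (hg (lnc l) rfl).symm
    set Z := Subgroup.center K
    have hsurj : Function.Surjective (QuotientGroup.mk' Z) := QuotientGroup.mk'_surjective Z
    have hgenQ : Subgroup.closure ((QuotientGroup.mk' Z) '' S) = ⊤ := by
      rw [← MonoidHom.map_closure, hgen, Subgroup.map_top_of_surjective _ hsurj]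
    have hnilQ : Group.IsNilpotent (K ⧸ Z) := by
      apply ih (K ⧸ Z) ((QuotientGroup.mk' Z) '' S) hgenQ
      intro lb hlen hmem
      obtain ⟨l, hlT, hlmap⟩ := exists_list_preimage (QuotientGroup.mk' Z) S lb
        (fun z hz => by
          obtain ⟨w, hw, hfw⟩ := hmem z hz
          exact ⟨w, hw, hfw⟩)
      have hllen : l.length = n + 1 := by
        rw [← hlmap, List.length_map] at hlen
        exact hlen
      have hc : lnc l ∈ Z := hcent l hllen hlT
      rw [← hlmap, ← map_lnc]
      rwa [← QuotientGroup.ker_mk' Z, MonoidHom.mem_ker] at hc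
    exact of_quotient_center_nilpotent hnilQ

/-- `p` divides the order of the image of `x` in `G ⧸ N`. -/
def pDvdOrderInQuot {G : Type*} [Group G] (N : Subgroup G) [N.Normal] (x : G) (p : ℕ) :
    Prop :=
  p ∣ orderOf (QuotientGroup.mk' N x)

/-- `π(x)`: the set of primes dividing the order of the image of `x` in some
quotient of `G` by an open normal subgroup (i.e. in some finite continuous
quotient, when `G` is profinite). -/
def primesOf {G : Type*} [Group G] [TopologicalSpace G] (x : G) : Set ℕ :=
  {p | p.Prime ∧ ∃ (N : Subgroup G) (hN : N.Normal), IsOpen (N : Set G) ∧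
    @pDvdOrderInQuot G _ N hN x p}

/-- `g` is a uniform `k`-step commutator: `g = [x₁,…,x_k]` (left-normed) with
`π(x₁) = ⋯ = π(x_k)`. -/
def IsUniformCommutator {G : Type*} [Group G] [TopologicalSpace G] (k : ℕ) (g : G) : Prop :=
  ∃ x : Fin k → G, (∀ i j, primesOf (x i) = primesOf (x j)) ∧ g = lnc (List.ofFn x)

def nilpQuot {G : Type*} [Group G] (N : Subgroup G) [N.Normal] : Prop :=
  Group.IsNilpotent (G ⧸ N)

/-- A topological group is pronilpotent if all its quotients by open normal
subgroups are nilpotent. -/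
def IsPronilpotent (G : Type*) [Group G] [TopologicalSpace G] : Prop :=
  ∀ (N : Subgroup G) (hN : N.Normal), IsOpen (N : Set G) → @nilpQuot G _ N hN

def solvQuot {G : Type*} [Group G] (N : Subgroup G) [N.Normal] : Prop :=
  IsSolvable (G ⧸ N)

/-- A topological group is prosoluble if all its quotients by open normal
subgroups are soluble. -/
def IsProsoluble (G : Type*) [Group G] [TopologicalSpace G] : Prop :=
  ∀ (N : Subgroup G) (hN : N.Normal), IsOpen (N : Set G) → @solvQuot G _ N hN

/-- An element is an FC-element if its conjugacy class is finite. -/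
def IsFCElement {G : Type*} [Group G] (x : G) : Prop :=
  {y : G | ∃ h : G, y = h⁻¹ * x * h}.Finite

lemma pronilpotent_of_comm {K : Type*} [Group K] [TopologicalSpace K]
    (h : ∀ a b : K, a * b = b * a) : IsPronilpotent K := by
  intro N hN _
  unfold nilpQuot
  apply isNilpotent_of_comm
  intro a b
  induction a using QuotientGroup.induction_on with | _ a =>
  induction b using QuotientGroup.induction_on with | _ b =>
  rw [← QuotientGroup.mk_mul, ← QuotientGroup.mk_mul, h a b]

open scoped commutatorElement in
lemma main_of_FC {G : Type*} [Group G] [TopologicalSpace G] [IsTopologicalGroup G]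
    [CompactSpace G] [T2Space G] [TotallyDisconnectedSpace G]
    (hprosol : IsProsoluble G) (g : G) (hg : g ≠ 1) (hFC : IsFCElement g) :
    ∃ F : Subgroup G, F ≠ ⊥ ∧ F.Normal ∧ IsClosed (F : Set G) ∧ IsPronilpotent ↥F := by
  classical
  set S : Set G := {y | ∃ h : G, y = h⁻¹ * g * h} with hS
  have hSfin : S.Finite := hFC
  have hgS : g ∈ S := ⟨1, by simp⟩
  have hconjS : ∀ y ∈ S, ∀ c : G, c⁻¹ * y * c ∈ S := by
    rintro y ⟨h, rfl⟩ c
    exact ⟨h * c, by group⟩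
  have hCopen : ∀ y ∈ S, IsOpen {x : G | x⁻¹ * y * x = y} := by
    intro y hyS
    have hfc : Continuous fun x : G => x⁻¹ * y * x := by fun_prop
    rw [← isClosed_compl_iff]
    have hcompl : {x : G | x⁻¹ * y * x = y}ᶜ =
        ⋃ t ∈ S \ {y}, (fun x : G => x⁻¹ * y * x) ⁻¹' {t} := by
      ext x
      simp only [Set.mem_compl_iff, Set.mem_setOf_eq, Set.mem_iUnion, Set.mem_preimage,
        Set.mem_singleton_iff, Set.mem_diff, exists_prop]
      constructor
      · intro hne
        exact ⟨x⁻¹ * y * x, ⟨hconjS y hyS x, hne⟩, rfl⟩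
      · rintro ⟨t, ⟨htS, htne⟩, rfl⟩
        exact htne
    rw [hcompl]
    exact (hSfin.subset Set.diff_subset).isClosed_biUnion
      fun t _ => isClosed_singleton.preimage hfc
  set K := Subgroup.centralizer S with hK
  have hKcar : (K : Set G) = ⋂ y ∈ S, {x : G | x⁻¹ * y * x = y} := by
    ext x
    simp only [hK, SetLike.mem_coe, Subgroup.mem_centralizer_iff, Set.mem_iInter,
      Set.mem_setOf_eq]
    constructor
    · intro h y hy
      have h2 := h y hy
      calc x⁻¹ * y * x = x⁻¹ * (y * x) := by group
        _ = x⁻¹ * (x * y) := by rw [h2]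
        _ = y := by group
    · intro h y hy
      have h2 := h y hy
      calc y * x = x * (x⁻¹ * y * x) := by group
        _ = x * y := by rw [h2]
  have hKopen : IsOpen (K : Set G) := by
    rw [hKcar]
    exact hSfin.isOpen_biInter hCopen
  have hKclosed : IsClosed (K : Set G) := K.isClosed_of_isOpen hKopen
  have hKnormal : K.Normal := by
    constructor
    intro x hx c
    rw [hK, Subgroup.mem_centralizer_iff] at hx ⊢
    intro y hy
    have h1 := hx (c⁻¹ * y * c) (hconjS y hy c)
    calc y * (c * x * c⁻¹) = c * ((c⁻¹ * y * c) * x) * c⁻¹ := by group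
      _ = c * (x * (c⁻¹ * y * c)) * c⁻¹ := by rw [h1]
      _ = (c * x * c⁻¹) * y := by group
  set M0 := Subgroup.normalClosure {g} with hM0
  haveI hM0normal : M0.Normal := Subgroup.normalClosure_normal
  set M := M0.topologicalClosure with hM
  have hgM : g ∈ M := M0.le_topologicalClosure (Subgroup.subset_normalClosure rfl)
  have hMnormal : M.Normal := Subgroup.is_normal_topologicalClosure M0
  have hMclosed : IsClosed (M : Set G) := M0.isClosed_topologicalClosure
  have hKM : ∀ x ∈ K, ∀ m ∈ M, x * m = m * x := by
    intro x hx
    have hxc := Subgroup.mem_centralizer_iff.mp hx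
    have hM0le : M0 ≤ Subgroup.centralizer {x} := by
      rw [hM0]
      unfold Subgroup.normalClosure
      apply (Subgroup.closure_le _).mpr
      intro y hy
      have hyS : y ∈ S := by
        rw [Group.mem_conjugatesOfSet_iff] at hy
        obtain ⟨a, ha, hconj⟩ := hy
        rw [Set.mem_singleton_iff] at ha
        subst ha
        rw [isConj_iff] at hconj
        obtain ⟨c, hc⟩ := hconj
        exact ⟨c⁻¹, by rw [← hc]; group⟩
      rw [SetLike.mem_coe, Subgroup.mem_centralizer_iff]
      intro u hu
      rw [Set.mem_singleton_iff] at hu; subst hu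
      exact (hxc y hyS).symm
    have hMle : M ≤ Subgroup.centralizer {x} := by
      apply Subgroup.topologicalClosure_minimal M0 hM0le
      have hcs : (Subgroup.centralizer {x} : Set G) = {z : G | x * z = z * x} := by
        ext z
        simp [Subgroup.mem_centralizer_iff]
      rw [hcs]
      exact isClosed_eq (continuous_const.mul continuous_id) (continuous_id.mul continuous_const)
    intro m hm
    exact Subgroup.mem_centralizer_iff.mp (hMle hm) x rfl
  set A := K ⊓ M with hA
  have hAnormal : A.Normal := by
    constructor
    intro a ha c
    rw [hA, Subgroup.mem_inf] at ha ⊢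
    exact ⟨hKnormal.conj_mem a ha.1 c, hMnormal.conj_mem a ha.2 c⟩
  have hAclosed : IsClosed (A : Set G) := by
    have hcar : (A : Set G) = (K : Set G) ∩ (M : Set G) := rfl
    rw [hcar]
    exact hKclosed.inter hMclosed
  have hAcomm : ∀ a b : G, a ∈ A → b ∈ A → a * b = b * a := by
    intro a b ha hb
    rw [hA, Subgroup.mem_inf] at ha hb
    exact hKM a ha.1 b hb.2
  by_cases hAbot : A = ⊥
  case neg =>
    refine ⟨A, hAbot, hAnormal, hAclosed, pronilpotent_of_comm ?_⟩
    intro a b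
    exact Subtype.ext (by simpa using hAcomm a b a.2 b.2)
  case pos =>
    -- M is finite
    have hMcompact : IsCompact (M : Set G) := hMclosed.isCompact
    have hcover : (M : Set G) ⊆ ⋃ m ∈ (M : Set G), (fun x => m * x) '' (K : Set G) := by
      intro m hm
      exact Set.mem_biUnion hm ⟨1, K.one_mem, by simp⟩
    obtain ⟨b, hbM, hbfin, hbcover⟩ := hMcompact.elim_finite_subcover_image
      (fun m _ => (isOpenMap_mul_left m) _ hKopen) hcover
    have hsub : ∀ m, ((M : Set G) ∩ ((fun x => m * x) '' (K : Set G))).Subsingleton := by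
      intro m x hx y hy
      obtain ⟨hxM, k1, hk1, hxe⟩ := hx
      obtain ⟨hyM, k2, hk2, hye⟩ := hy
      have hxy : x⁻¹ * y ∈ A := by
        rw [hA, Subgroup.mem_inf]
        constructor
        · have : x⁻¹ * y = k1⁻¹ * k2 := by rw [← hxe, ← hye]; group
          rw [this]
          exact K.mul_mem (K.inv_mem hk1) hk2
        · exact M.mul_mem (M.inv_mem hxM) hyM
      rw [hAbot, Subgroup.mem_bot] at hxy
      exact inv_mul_eq_one.mp hxy
    have hMfin : (M : Set G).Finite := by
      apply Set.Finite.subset (Set.Finite.biUnion hbfin (fun m _ => (hsub m).finite))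
      intro x hx
      obtain ⟨m, hmb, hxm⟩ := Set.mem_iUnion₂.mp (hbcover hx)
      exact Set.mem_biUnion hmb ⟨hx, hxm⟩
        -- find an open normal subgroup intersecting M trivially
    haveI hMsetFin : Finite ↥((M : Set G) \ {1}) :=
      (hMfin.subset Set.diff_subset).to_subtype
    have hex : ∀ m : ↥((M : Set G) \ {1}), ∃ H : OpenNormalSubgroup G,
        (m : G) ∉ (H : Subgroup G) := by
      intro m
      have hm1 : (1 : G) ∈ ({(m : G)}ᶜ : Set G) := by
        simp only [Set.mem_compl_iff, Set.mem_singleton_iff]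
        exact fun h => m.2.2 (by simpa using h.symm)
      obtain ⟨V, hVclopen, h1V, hVsub⟩ :=
        compact_exists_isClopen_in_isOpen isClosed_singleton.isOpen_compl hm1
      obtain ⟨H, hH⟩ :=
        IsTopologicalGroup.exist_openNormalSubgroup_sub_clopen_nhds_of_one hVclopen h1V
      exact ⟨H, fun hm => (hVsub (hH hm)) rfl⟩
    choose HH hHH using hex
    set U : Subgroup G := ⨅ m, ((HH m : OpenNormalSubgroup G) : Subgroup G) with hUdef
    have hUopen : IsOpen (U : Set G) := by
      rw [hUdef, Subgroup.coe_iInf]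
      exact isOpen_iInter_of_finite fun m => (HH m).toOpenSubgroup.isOpen
    have hUnormal : U.Normal := by
      constructor
      intro u hu c
      rw [hUdef, Subgroup.mem_iInf] at hu ⊢
      intro m
      exact (HH m).isNormal'.conj_mem u (hu m) c
    have hUM : ∀ m ∈ M, m ∈ U → m = 1 := by
      intro m hm hmU
      by_contra hne
      have hmem : m ∈ (M : Set G) \ {1} := ⟨hm, hne⟩
      exact hHH ⟨m, hmem⟩ ((Subgroup.mem_iInf.mp hmU) ⟨m, hmem⟩)
    haveI hsolv : Group.IsSolvable (G ⧸ U) := hprosol U hUnormal hUopen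
    have hφinj : Function.Injective ((QuotientGroup.mk' U).comp M.subtype) := by
      rw [injective_iff_map_eq_one]
      intro a ha
      have haU : (a : G) ∈ U := (QuotientGroup.eq_one_iff _).mp ha
      exact Subtype.ext (hUM a a.2 haU)
    haveI : Group.IsSolvable ↥M := solvable_of_solvable_injective hφinj
    -- derived series of M inside G
    set D : ℕ → Subgroup G :=
      fun n => Nat.rec (motive := fun _ => Subgroup G) M (fun _ Dn => ⁅Dn, Dn⁆) n with hDdef
    have hD0 : D 0 = M := rfl
    have hDsucc : ∀ n, D (n + 1) = ⁅D n, D n⁆ := fun n => rfl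
    have hDmap : ∀ n, D n = (derivedSeries ↥M n).map M.subtype := by
      intro n
      induction n with
      | zero =>
        rw [hD0, derivedSeries_zero, ← MonoidHom.range_eq_map, M.range_subtype]
      | succ n ihn =>
        rw [hDsucc, ihn, derivedSeries_succ, Subgroup.map_commutator]
    obtain ⟨nsol, hnsol⟩ := (isSolvable_def ↥M).mp inferInstance
    have hDn : D nsol = ⊥ := by rw [hDmap, hnsol, Subgroup.map_bot]
    have hD0ne : D 0 ≠ ⊥ := by
      rw [hD0]
      intro h
      exact hg (Subgroup.mem_bot.mp (h ▸ hgM))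
    have hkey : ∀ n, D n = ⊥ → ∃ j, D j ≠ ⊥ ∧ D (j + 1) = ⊥ := by
      intro n
      induction n with
      | zero => intro h; exact absurd h hD0ne
      | succ n ihn =>
        intro h
        by_cases hn : D n = ⊥
        · exact ihn hn
        · exact ⟨n, hn, h⟩
    obtain ⟨j, hjne, hjbot⟩ := hkey nsol hDn
    have hDnormal : ∀ n, (D n).Normal := by
      intro n
      induction n with
      | zero => exact hMnormal
      | succ n ihn => exact @Subgroup.commutator_normal _ _ _ _ ihn ihn
    have hDleM : ∀ n, D n ≤ M := by
      intro n
      rw [hDmap]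
      exact Subgroup.map_subtype_le _
    have hBfin : ((D j : Set G)).Finite := hMfin.subset (hDleM j)
    have hBclosed : IsClosed (D j : Set G) := hBfin.isClosed
    have hBcomm : ∀ a b : G, a ∈ D j → b ∈ D j → a * b = b * a := by
      intro a b ha hb
      have hmem : ⁅a, b⁆ ∈ (⊥ : Subgroup G) := by
        rw [← hjbot, hDsucc]
        exact Subgroup.commutator_mem_commutator ha hb
      have h1 : a * b * a⁻¹ * b⁻¹ = 1 := by
        have := Subgroup.mem_bot.mp hmem
        rwa [commutatorElement_def] at this
      calc a * b = (a * b * a⁻¹ * b⁻¹) * (b * a) := by group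
        _ = b * a := by rw [h1, one_mul]
    refine ⟨D j, hjne, hDnormal j, hBclosed, pronilpotent_of_comm ?_⟩
    intro a b
    exact Subtype.ext (by simpa using hBcomm a b a.2 b.2)


lemma orderOf_conj_eq {K : Type*} [Group K] (a c : K) : orderOf (c⁻¹ * a * c) = orderOf a := by
  have h : c⁻¹ * a * c = (MulAut.conj c⁻¹) a := by
    rw [MulAut.conj_apply, inv_inv]
  rw [h]
  exact orderOf_injective (MulAut.conj c⁻¹).toMonoidHom (MulAut.conj c⁻¹).injective a

lemma primesOf_conj {G : Type*} [Group G] [TopologicalSpace G] (y h : G) :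
    primesOf (h⁻¹ * y * h) = primesOf y := by
  ext p
  unfold primesOf pDvdOrderInQuot
  simp only [Set.mem_setOf_eq]
  constructor
  · rintro ⟨hp, N, hN, hop, hdvd⟩
    refine ⟨hp, N, hN, hop, ?_⟩
    rwa [map_mul, map_mul, map_inv, orderOf_conj_eq] at hdvd
  · rintro ⟨hp, N, hN, hop, hdvd⟩
    refine ⟨hp, N, hN, hop, ?_⟩
    rw [map_mul, map_mul, map_inv, orderOf_conj_eq]
    exact hdvd

theorem stmt16 {G : Type*} [Group G] [TopologicalSpace G] [IsTopologicalGroup G]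
    [CompactSpace G] [T2Space G] [TotallyDisconnectedSpace G]
    (hnontriv : Nontrivial G) (hprosol : IsProsoluble G)
    (k : ℕ) (hk : 1 ≤ k)
    (hFC : ∀ g : G, IsUniformCommutator k g → IsFCElement g) :
    ∃ F : Subgroup G, F ≠ ⊥ ∧ F.Normal ∧ IsClosed (F : Set G) ∧ IsPronilpotent ↥F := by
  classical
  obtain ⟨y, hy⟩ := exists_ne (1 : G)
  by_cases hc : ∀ l : List G, l.length = k → (∀ z ∈ l, ∃ h : G, z = h⁻¹ * y * h) → lnc l = 1
  · -- all commutators of conjugates of y are trivial: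
    -- the closed normal closure of y is pronilpotent
    obtain ⟨n, rfl⟩ := Nat.exists_eq_succ_of_ne_zero (Nat.one_le_iff_ne_zero.mp hk)
    set M0 := Subgroup.normalClosure {y} with hM0
    haveI : M0.Normal := Subgroup.normalClosure_normal
    set F := M0.topologicalClosure with hFdef
    have hyF : y ∈ F := M0.le_topologicalClosure (Subgroup.subset_normalClosure rfl)
    refine ⟨F, ?_, Subgroup.is_normal_topologicalClosure M0,
      M0.isClosed_topologicalClosure, ?_⟩
    · intro hbot
      exact hy (Subgroup.mem_bot.mp (hbot ▸ hyF))
    · intro N hN hNopen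
      haveI := hN
      unfold nilpQuot
      set T : Set ↥F := {z : ↥F | ∃ h : G, (z : G) = h⁻¹ * y * h} with hT
      have hTconj : ∀ z ∈ T, (z : G) ∈ M0 := by
        rintro z ⟨h, hz⟩
        apply Subgroup.conjugatesOfSet_subset_normalClosure
        rw [Group.mem_conjugatesOfSet_iff]
        exact ⟨y, rfl, isConj_iff.mpr ⟨h⁻¹, by rw [hz]; group⟩⟩
      apply isNilpotent_of_lnc n (↥F ⧸ N) ((QuotientGroup.mk' N) '' T)
      · -- generation
        set R := (Subgroup.closure ((QuotientGroup.mk' N) '' T)).comap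
          (QuotientGroup.mk' N) with hR
        have hNR : N ≤ R := by
          intro x hx
          have hx1 : QuotientGroup.mk' N x = 1 := (QuotientGroup.eq_one_iff x).mpr hx
          rw [hR, Subgroup.mem_comap, hx1]
          exact Subgroup.one_mem _
        have hRopen : IsOpen (R : Set ↥F) := Subgroup.isOpen_mono hNR hNopen
        have hRclosed : IsClosed (R : Set ↥F) := R.isClosed_of_isOpen hRopen
        set W := R.map F.subtype with hW
        have hWclosed : IsClosed (W : Set G) := by
          rw [hW, Subgroup.coe_map]
          exact ((M0.isClosed_topologicalClosure).isClosedEmbedding_subtypeVal.isClosedMap)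
            _ hRclosed
        have hM0W : M0 ≤ W := by
          rw [hM0]
          unfold Subgroup.normalClosure
          apply (Subgroup.closure_le _).mpr
          intro c hcconj
          have hcM0 : c ∈ M0 := Subgroup.conjugatesOfSet_subset_normalClosure hcconj
          have hcF : c ∈ F := M0.le_topologicalClosure hcM0
          have hcT : (⟨c, hcF⟩ : ↥F) ∈ T := by
            rw [Group.mem_conjugatesOfSet_iff] at hcconj
            obtain ⟨a, ha, hconj⟩ := hcconj
            rw [Set.mem_singleton_iff] at ha
            rw [ha] at hconj
            obtain ⟨d, hd⟩ := isConj_iff.mp hconj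
            refine ⟨d⁻¹, ?_⟩
            show c = d⁻¹⁻¹ * y * d⁻¹
            rw [inv_inv]
            exact hd.symm
          have hcR : (⟨c, hcF⟩ : ↥F) ∈ R := by
            rw [hR, Subgroup.mem_comap]
            exact Subgroup.subset_closure ⟨⟨c, hcF⟩, hcT, rfl⟩
          exact ⟨⟨c, hcF⟩, hcR, rfl⟩
        have hFW : F ≤ W := by
          rw [hFdef]
          exact Subgroup.topologicalClosure_minimal M0 hM0W hWclosed
        have hRtop : ∀ z : ↥F, z ∈ R := by
          intro z
          obtain ⟨z', hz'R, hz'e⟩ := hFW z.2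
          have hzz : z' = z := Subtype.ext hz'e
          rw [← hzz]
          exact hz'R
        rw [eq_top_iff]
        intro q _
        induction q using QuotientGroup.induction_on with | _ z =>
        exact Subgroup.mem_comap.mp (hRtop z)
      · -- commutator triviality
        intro lb hlen hmem
        obtain ⟨l, hlT, hlmap⟩ :=
          exists_list_preimage (QuotientGroup.mk' N) T lb (fun z hz => hmem z hz)
        have hlnc1 : lnc l = 1 := by
          have hval : ((lnc l : ↥F) : G) = lnc (l.map F.subtype) := map_lnc F.subtype l
          have hzero := hc (l.map F.subtype) ?_ ?_
          · apply Subtype.ext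
            rw [hval, hzero]
            rfl
          · rw [← hlmap, List.length_map] at hlen
            rw [List.length_map]
            exact hlen
          · intro z hz
            rw [List.mem_map] at hz
            obtain ⟨w, hwl, rfl⟩ := hz
            exact hlT w hwl
        rw [← hlmap, ← map_lnc, hlnc1, map_one]
  · push_neg at hc
    obtain ⟨l, hlen, hm, hne⟩ := hc
    subst hlen
    have huc : IsUniformCommutator l.length (lnc l) := by
      refine ⟨l.get, ?_, ?_⟩
      · intro i j
        obtain ⟨h1, he1⟩ := hm (l.get i) (List.get_mem l i)
        obtain ⟨h2, he2⟩ := hm (l.get j) (List.get_mem l j)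
        rw [he1, he2, primesOf_conj, primesOf_conj]
      · rw [List.ofFn_get]
    exact main_of_FC hprosol (lnc l) hne (hFC _ huc)
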